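/- Let n, d be integers with 2 ≤ d < n and let A be an n × n matrix with entries in {0,1}, with rows and columns indexed by ℤ/nℤ, such that every row of A has exactly d ones. Assume that for every j ∈ ℤ/nℤ, the columns j and j + 1 of A have exactly d − 1 common ones (i.e., the number of rows i with A_{i,j} = A_{i,j+1} = 1 equals d − 1). Then for every row i, the support of row i is a cyclic interval of length d in ℤ/nℤ. -/

import Mathlib

open Finset

/-- The cyclic interval `{i, i+1, …, i+s-1}` of length `s` in `ZMod n`. -/
def cycInt (n : ℕ) [NeZero n] (i : ZMod n) (s : ℕ) : Finset (ZMod n) :=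
  (Finset.range s).image (fun t : ℕ => i + (t : ZMod n))

section Aux

variable {n : ℕ} [NeZero n]

lemma aux_cast_val (a : ZMod n) : ((a.val : ℕ) : ZMod n) = a := by
  simp [ZMod.natCast_val, ZMod.cast_id]

lemma aux_cast_ne_zero {t : ℕ} (h0 : 0 < t) (hn : t < n) : (t : ZMod n) ≠ 0 := by
  intro h
  have := congrArg ZMod.val h
  rw [ZMod.val_cast_of_lt hn, ZMod.val_zero] at this
  omega

lemma aux_cycInt_card (a : ZMod n) (s : ℕ) (hs : s ≤ n) : (cycInt n a s).card = s := by
  rw [cycInt, Finset.card_image_of_injOn, Finset.card_range]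
  intro x hx y hy hxy
  simp only [Finset.coe_range, Set.mem_Iio] at hx hy
  have h1 : ((x : ZMod n)) = (y : ZMod n) := by simpa using add_left_cancel hxy
  have h2 := congrArg ZMod.val h1
  rwa [ZMod.val_cast_of_lt (lt_of_lt_of_le hx hs),
    ZMod.val_cast_of_lt (lt_of_lt_of_le hy hs)] at h2

lemma aux_blockstart (S : Finset (ZMod n)) (hne : S.Nonempty) (hnu : ∃ x, x ∉ S) :
    ∃ a ∈ S, a - 1 ∉ S := by
  classical
  obtain ⟨x, hx⟩ := hnu
  obtain ⟨s, hs⟩ := hne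
  have hex : ∃ k : ℕ, x + (k : ZMod n) ∈ S :=
    ⟨(s - x).val, by rw [aux_cast_val]; simpa using hs⟩
  have hk : x + ((Nat.find hex : ℕ) : ZMod n) ∈ S := Nat.find_spec hex
  have hk0 : Nat.find hex ≠ 0 := by
    intro h
    rw [h] at hk
    simp only [Nat.cast_zero, add_zero] at hk
    exact hx hk
  refine ⟨x + ((Nat.find hex : ℕ) : ZMod n), hk, ?_⟩
  have hlt : Nat.find hex - 1 < Nat.find hex := Nat.sub_lt (Nat.pos_of_ne_zero hk0) one_pos
  have hmin := Nat.find_min hex hlt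
  intro hmem
  apply hmin
  have heq : x + ((Nat.find hex : ℕ) : ZMod n) - 1
      = x + ((Nat.find hex - 1 : ℕ) : ZMod n) := by
    rw [Nat.cast_sub (Nat.one_le_iff_ne_zero.mpr hk0)]
    push_cast
    ring
  rwa [heq] at hmem

/-- The key structural lemma about one row. -/
lemma aux_main (S : Finset (ZMod n)) (d : ℕ) (hd : 1 ≤ d) (hdn : d < n) (hcard : S.card = d) :
    (S.filter (fun j => j + 1 ∈ S)).card ≤ d - 1 ∧
    ((S.filter (fun j => j + 1 ∈ S)).card = d - 1 → ∃ a, S = cycInt n a d) := by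
  classical
  have hne : S.Nonempty := Finset.card_pos.mp (by omega)
  have hnu : ∃ x, x ∉ S := by
    by_contra h
    push_neg at h
    have : S = Finset.univ := Finset.eq_univ_of_forall h
    rw [this, Finset.card_univ, ZMod.card] at hcard
    omega
  obtain ⟨a, haS, ha1⟩ := aux_blockstart S hne hnu
  set T := S.filter (fun j => j + 1 ∈ S) with hT
  have hinj : Set.InjOn (fun j : ZMod n => j + 1) T := fun x _ y _ h => by
    simpa using h
  have himcard : (T.image (fun j => j + 1)).card = T.card :=
    Finset.card_image_of_injOn hinj
  have hsub : T.image (fun j => j + 1) ⊆ S.erase a := by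
    intro y hy
    simp only [Finset.mem_image] at hy
    obtain ⟨j, hj, rfl⟩ := hy
    rw [hT, Finset.mem_filter] at hj
    refine Finset.mem_erase.mpr ⟨?_, hj.2⟩
    intro h
    apply ha1
    have hja : j = a - 1 := by rw [← h]; ring
    have := hj.1
    rwa [hja] at this
  have herase : (S.erase a).card = d - 1 := by
    rw [Finset.card_erase_of_mem haS, hcard]
  have hle : T.card ≤ d - 1 := by
    rw [← himcard, ← herase]
    exact Finset.card_le_card hsub
  refine ⟨hle, ?_⟩
  intro heq
  -- equality case: the image equals the erase, giving the predecessor property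
  have himeq : T.image (fun j => j + 1) = S.erase a := by
    apply Finset.eq_of_subset_of_card_le hsub
    rw [himcard, heq, herase]
  have hpred : ∀ s ∈ S, s ≠ a → s - 1 ∈ S := by
    intro s hsS hsa
    have hse : s ∈ S.erase a := Finset.mem_erase.mpr ⟨hsa, hsS⟩
    rw [← himeq, Finset.mem_image] at hse
    obtain ⟨j, hj, rfl⟩ := hse
    rw [hT, Finset.mem_filter] at hj
    have : j + 1 - 1 = j := by ring
    rw [this]
    exact hj.1
  -- chain down: all points a + k for k ≤ t lie in S
  have hdown : ∀ t : ℕ, t < n → a + (t : ZMod n) ∈ S →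
      ∀ k : ℕ, k ≤ t → a + (k : ZMod n) ∈ S := by
    intro t
    induction t with
    | zero =>
      intro _ h k hk
      interval_cases k
      simpa using h
    | succ t ih =>
      intro htn hmem k hk
      have hne' : a + ((t + 1 : ℕ) : ZMod n) ≠ a := by
        intro h
        have : ((t + 1 : ℕ) : ZMod n) = 0 := by
          have := h
          have := add_left_cancel (this.trans (add_zero a).symm)
          simpa using this
        exact aux_cast_ne_zero (Nat.succ_pos t) htn this
      have hstep : a + ((t : ℕ) : ZMod n) ∈ S := by
        have := hpred _ hmem hne'
        have heq2 : a + ((t + 1 : ℕ) : ZMod n) - 1 = a + ((t : ℕ) : ZMod n) := by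
          push_cast
          ring
        rwa [heq2] at this
      rcases Nat.lt_or_ge k (t + 1) with h | h
      · exact ih (by omega) hstep k (by omega)
      · have : k = t + 1 := by omega
        rw [this]
        exact hmem
  -- S ⊆ cycInt a d
  refine ⟨a, ?_⟩
  have hsubc : S ⊆ cycInt n a d := by
    intro s hsS
    have htn : (s - a).val < n := ZMod.val_lt _
    have hmem : a + (((s - a).val : ℕ) : ZMod n) ∈ S := by
      rw [aux_cast_val]
      simpa using hsS
    -- cycInt a (val + 1) ⊆ S, so val + 1 ≤ d
    have hsub2 : cycInt n a ((s - a).val + 1) ⊆ S := by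
      intro y hy
      rw [cycInt, Finset.mem_image] at hy
      obtain ⟨k, hk, rfl⟩ := hy
      rw [Finset.mem_range] at hk
      exact hdown _ htn hmem k (by omega)
    have hcardle : (s - a).val + 1 ≤ d := by
      have := Finset.card_le_card hsub2
      rwa [aux_cycInt_card a _ (by omega), hcard] at this
    rw [cycInt, Finset.mem_image]
    exact ⟨(s - a).val, Finset.mem_range.mpr (by omega), by rw [aux_cast_val]; ring⟩
  exact (Finset.eq_of_subset_of_card_le hsubc
    (by rw [aux_cycInt_card a d (le_of_lt hdn), hcard])).symm ▸ rfl

end Aux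

/-- Let `2 ≤ d < n` and let `A` be an `n × n` 0/1-matrix indexed by `ZMod n` whose rows
all have exactly `d` ones, such that for every `j` the columns `j` and `j + 1` have
exactly `d - 1` common ones. Then every row's support is a cyclic interval of
length `d` in `ZMod n`. -/
theorem stmt11 (n d : ℕ) [NeZero n] (hd : 2 ≤ d) (hdn : d < n)
    (A : ZMod n → ZMod n → Bool)
    (hrow : ∀ i : ZMod n, (univ.filter (fun j => A i j)).card = d)
    (hadj : ∀ j : ZMod n,
      (univ.filter (fun i => A i j ∧ A i (j + 1))).card = d - 1) :
    ∀ i : ZMod n, ∃ a : ZMod n, univ.filter (fun j => A i j) = cycInt n a d := by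
  classical
  intro i
  set S : ZMod n → Finset (ZMod n) := fun i => univ.filter (fun j => A i j) with hS
  have hTeq : ∀ i : ZMod n, (S i).filter (fun j => j + 1 ∈ S i)
      = univ.filter (fun j => A i j ∧ A i (j + 1)) := by
    intro i
    ext j
    simp [hS, Finset.mem_filter]
  have hmain := fun i => aux_main (S i) d (by omega) hdn (hrow i)
  -- double counting
  have hsum : ∑ i : ZMod n, ((S i).filter (fun j => j + 1 ∈ S i)).card
      = ∑ j : ZMod n, (univ.filter (fun i => A i j ∧ A i (j + 1))).card := by
    simp only [hTeq]
    simp only [Finset.card_filter]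
    rw [Finset.sum_comm]
  have hrhs : ∑ j : ZMod n, (univ.filter (fun i => A i j ∧ A i (j + 1))).card
      = ∑ _j : ZMod n, (d - 1) := by
    exact Finset.sum_congr rfl (fun j _ => hadj j)
  -- every row achieves equality
  have hall : ∀ i : ZMod n, ((S i).filter (fun j => j + 1 ∈ S i)).card = d - 1 := by
    by_contra h
    push_neg at h
    obtain ⟨i0, hi0⟩ := h
    have hlt : ((S i0).filter (fun j => j + 1 ∈ S i0)).card < d - 1 :=
      lt_of_le_of_ne (hmain i0).1 hi0
    have : ∑ i : ZMod n, ((S i).filter (fun j => j + 1 ∈ S i)).card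
        < ∑ _i : ZMod n, (d - 1) :=
      Finset.sum_lt_sum (fun i _ => (hmain i).1) ⟨i0, Finset.mem_univ i0, hlt⟩
    rw [hsum, hrhs] at this
    exact lt_irrefl _ this
  exact (hmain i).2 (hall i)
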